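/- Lipschitz link function transfer: if μ : ℝ → ℝ is k_μ-Lipschitz, G is positive definite with G ⪰ c_μ V for a positive definite V and c_μ > 0, and g(θ₁) - g(θ₂) = G(θ₁ - θ₂), then for any vector a: |μ(a^⊤ θ₁) - μ(a^⊤ θ₂)| ≤ (k_μ / c_μ) ‖a‖_{V^{-1}} ‖g(θ₁) - g(θ₂)‖_{V^{-1}}. -/

import Mathlib

open Real Matrix

/-- Cauchy–Schwarz for a positive semidefinite real matrix. -/
lemma psd_cauchy_schwarz {d : ℕ} (M : Matrix (Fin d) (Fin d) ℝ)
    (hM : M.PosSemidef) (x y : Fin d → ℝ) :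
    (x ⬝ᵥ M.mulVec y) ^ 2 ≤ (x ⬝ᵥ M.mulVec x) * (y ⬝ᵥ M.mulVec y) := by
  have hMT : Mᵀ = M := (M.conjTranspose_eq_transpose_of_trivial).symm.trans hM.isHermitian
  have hsymm : ∀ v w : Fin d → ℝ, v ⬝ᵥ M.mulVec w = w ⬝ᵥ M.mulVec v := by
    intro v w
    rw [Matrix.dotProduct_mulVec, ← Matrix.mulVec_transpose, hMT, dotProduct_comm]
  have key : ∀ t : ℝ, 0 ≤ (y ⬝ᵥ M.mulVec y) * (t * t)
      + (2 * (x ⬝ᵥ M.mulVec y)) * t + (x ⬝ᵥ M.mulVec x) := by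
    intro t
    have h0 := hM.dotProduct_mulVec_nonneg (x + t • y)
    simp only [star_trivial] at h0
    have hexp : (x + t • y) ⬝ᵥ M.mulVec (x + t • y)
        = (y ⬝ᵥ M.mulVec y) * (t * t) + (2 * (x ⬝ᵥ M.mulVec y)) * t
          + (x ⬝ᵥ M.mulVec x) := by
      simp only [Matrix.mulVec_add, Matrix.mulVec_smul, add_dotProduct,
        smul_dotProduct, dotProduct_add, dotProduct_smul,
        smul_eq_mul, hsymm y x]
      ring
    linarith [hexp ▸ h0]
  have hd := discrim_le_zero key
  rw [discrim] at hd
  nlinarith [hd]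

/-- Lipschitz link function transfer:
`|μ(a^⊤θ₁) - μ(a^⊤θ₂)| ≤ (k_μ/c_μ) ‖a‖_{V⁻¹} ‖g(θ₁)-g(θ₂)‖_{V⁻¹}`. -/
theorem lipschitz_link_transfer
    (d : ℕ) (μl : ℝ → ℝ) (kμ cμ : ℝ) (hkμ : 0 ≤ kμ) (hcμ : 0 < cμ)
    (hlip : ∀ x y : ℝ, |μl x - μl y| ≤ kμ * |x - y|)
    (g : (Fin d → ℝ) → (Fin d → ℝ))
    (G V : Matrix (Fin d) (Fin d) ℝ) (hG : G.PosDef) (hV : V.PosDef)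
    (hGV : (G - cμ • V).PosSemidef)
    (θ₁ θ₂ : Fin d → ℝ)
    (hmv : g θ₁ - g θ₂ = G.mulVec (θ₁ - θ₂))
    (a : Fin d → ℝ) :
    |μl (a ⬝ᵥ θ₁) - μl (a ⬝ᵥ θ₂)|
      ≤ (kμ / cμ) * Real.sqrt (a ⬝ᵥ V⁻¹.mulVec a)
        * Real.sqrt ((g θ₁ - g θ₂) ⬝ᵥ V⁻¹.mulVec (g θ₁ - g θ₂)) := by
  set u : Fin d → ℝ := θ₁ - θ₂ with hu
  set Δ : Fin d → ℝ := g θ₁ - g θ₂ with hΔ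
  have hΔG : Δ = G.mulVec u := hmv
  have hVinv : (V⁻¹).PosDef := hV.inv
  have hdet : IsUnit V.det := (Matrix.isUnit_iff_isUnit_det V).mp hV.isUnit
  have hVV : V * V⁻¹ = 1 := Matrix.mul_nonsing_inv V hdet
  have hVV' : V⁻¹ * V = 1 := Matrix.nonsing_inv_mul V hdet
  have hVT : Vᵀ = V := (V.conjTranspose_eq_transpose_of_trivial).symm.trans hV.isHermitian
  set p : ℝ := u ⬝ᵥ V.mulVec u with hp
  set q : ℝ := Δ ⬝ᵥ V⁻¹.mulVec Δ with hq
  set r : ℝ := a ⬝ᵥ V⁻¹.mulVec a with hr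
  have hp0 : 0 ≤ p := hV.posSemidef.dotProduct_mulVec_nonneg u
  have hq0 : 0 ≤ q := hVinv.posSemidef.dotProduct_mulVec_nonneg Δ
  have hr0 : 0 ≤ r := hVinv.posSemidef.dotProduct_mulVec_nonneg a
  set s : ℝ := u ⬝ᵥ Δ with hs
  have hcp : cμ * p ≤ s := by
    have h0 := hGV.dotProduct_mulVec_nonneg u
    simp only [star_trivial] at h0
    have hexp : u ⬝ᵥ (G - cμ • V).mulVec u = s - cμ * p := by
      rw [Matrix.sub_mulVec, dotProduct_sub, Matrix.smul_mulVec,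
        dotProduct_smul, smul_eq_mul, ← hΔG]
    linarith [hexp ▸ h0]
  have hVuVinv : ∀ w : Fin d → ℝ, (V.mulVec u) ⬝ᵥ V⁻¹.mulVec w = u ⬝ᵥ w := by
    intro w
    rw [dotProduct_comm, Matrix.dotProduct_mulVec, ← Matrix.mulVec_transpose, hVT,
      Matrix.mulVec_mulVec, hVV, Matrix.one_mulVec, dotProduct_comm]
  have hVuVu : (V.mulVec u) ⬝ᵥ V⁻¹.mulVec (V.mulVec u) = p := by
    rw [hVuVinv, ← hp]
  have hVuΔ : (V.mulVec u) ⬝ᵥ V⁻¹.mulVec Δ = s := by rw [hVuVinv, ← hs]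
  have hCS1 : s ^ 2 ≤ p * q := by
    have := psd_cauchy_schwarz V⁻¹ hVinv.posSemidef (V.mulVec u) Δ
    rwa [hVuΔ, hVuVu, ← hq] at this
  have hkey : cμ ^ 2 * p ≤ q := by
    rcases eq_or_lt_of_le hp0 with h | h
    · rw [← h, mul_zero]; exact hq0
    · have h1 : (cμ * p) ^ 2 ≤ s ^ 2 := by
        have hcp0 : 0 ≤ cμ * p := by positivity
        nlinarith
      nlinarith [h1, hCS1, h]
  have hau : a ⬝ᵥ u = a ⬝ᵥ V⁻¹.mulVec (V.mulVec u) := by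
    rw [Matrix.mulVec_mulVec, hVV', Matrix.one_mulVec]
  have hCS2 : (a ⬝ᵥ u) ^ 2 ≤ r * p := by
    have := psd_cauchy_schwarz V⁻¹ hVinv.posSemidef a (V.mulVec u)
    rwa [hVuVu, ← hau, ← hr] at this
  have habs : |a ⬝ᵥ u| ≤ Real.sqrt r * Real.sqrt p := by
    rw [← Real.sqrt_mul hr0, ← Real.sqrt_sq_eq_abs]
    exact Real.sqrt_le_sqrt hCS2
  have hpq : Real.sqrt p ≤ Real.sqrt q / cμ := by
    rw [le_div_iff₀ hcμ]
    have heq : cμ * Real.sqrt p = Real.sqrt (cμ ^ 2 * p) := by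
      rw [Real.sqrt_mul (by positivity), Real.sqrt_sq hcμ.le]
    rw [mul_comm, heq]
    exact Real.sqrt_le_sqrt hkey
  have hstep : |μl (a ⬝ᵥ θ₁) - μl (a ⬝ᵥ θ₂)| ≤ kμ * |a ⬝ᵥ u| := by
    have h := hlip (a ⬝ᵥ θ₁) (a ⬝ᵥ θ₂)
    have hdp : a ⬝ᵥ θ₁ - a ⬝ᵥ θ₂ = a ⬝ᵥ u := by
      simp only [hu, dotProduct_sub]
    rwa [hdp] at h
  calc |μl (a ⬝ᵥ θ₁) - μl (a ⬝ᵥ θ₂)| ≤ kμ * |a ⬝ᵥ u| := hstep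
    _ ≤ kμ * (Real.sqrt r * (Real.sqrt q / cμ)) := by
        apply mul_le_mul_of_nonneg_left _ hkμ
        calc |a ⬝ᵥ u| ≤ Real.sqrt r * Real.sqrt p := habs
          _ ≤ Real.sqrt r * (Real.sqrt q / cμ) :=
            mul_le_mul_of_nonneg_left hpq (Real.sqrt_nonneg r)
    _ = (kμ / cμ) * Real.sqrt r * Real.sqrt q := by ring
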